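/- The TSP polytope 𝒫ₙ is contained in the projection of Q̄₁ onto the y-variables: 𝒫ₙ ⊆ { y : ∃ w ∈ ℝ^{m×m}, (w,y) ∈ Q̄₁ }. -/
import Mathlib


/-- The assignment (Birkhoff) polytope `𝒜ₙ` (with `m = n - 1`): the set of
`m × m` doubly stochastic matrices.  Index `i : Fin m` stands for city `i+1`
(a city in `{1,…,m}`), index `r : Fin m` for stage/position `r+1`. -/
def assignmentPolytope (m : ℕ) : Set (Fin m → Fin m → ℝ) :=
  {w | (∀ i, ∑ r, w i r = 1) ∧ (∀ r, ∑ i, w i r = 1) ∧ ∀ i r, 0 ≤ w i r}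

/-- The polytope `Q̄₁`.  Cities are `Fin (m+1)` (city `0` is the depot, and
`i.succ : Fin (m+1)` is city `i+1` for `i : Fin m`).  The `y`-variables are
indexed by ordered pairs of distinct cities; the (nonexistent) diagonal
entries are pinned to `0`. -/
def Qbar1 (m : ℕ) :
    Set ((Fin m → Fin m → ℝ) × (Fin (m + 1) → Fin (m + 1) → ℝ)) :=
  {p |
    p.1 ∈ assignmentPolytope m ∧
    (∀ i, p.2 i i = 0) ∧
    (∀ i r : Fin m, r.val = 0 → p.2 0 i.succ = p.1 i r) ∧
    (∀ i r : Fin m, r.val = m - 1 → p.2 i.succ 0 = p.1 i r) ∧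
    (∀ i j r r' : Fin m, i ≠ j → r'.val = r.val + 1 →
      p.1 i r + p.1 j r' - p.2 i.succ j.succ ≤ 1) ∧
    (∑ i : Fin m, ∑ j : Fin m, if i = j then 0 else p.2 i.succ j.succ) = (m : ℝ) - 1 ∧
    (∀ i j, 0 ≤ p.2 i j)}

/-- The permutation matrix `ŵ` of a permutation `u` of `{1,…,m}`:
`ŵ_{ir} = 1` iff city `i+1` is visited at stage `r+1`, i.e. iff `i = u r`. -/
def permMatrix (m : ℕ) (u : Equiv.Perm (Fin m)) : Fin m → Fin m → ℝ :=
  fun i r => if i = u r then 1 else 0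

/-- The tour incidence vector `ȳ^u` of a permutation `u` of `{1,…,m}`:
`ȳ^u_{0,u(1)} = 1`, `ȳ^u_{u(m),0} = 1`, `ȳ^u_{u(q),u(q+1)} = 1` for
`q = 1,…,m−1`, and all other entries are `0`. -/
def tourVec (m : ℕ) (u : Equiv.Perm (Fin m)) : Fin (m + 1) → Fin (m + 1) → ℝ :=
  fun a b =>
    if (∃ r : Fin m, r.val = 0 ∧ a = 0 ∧ b = (u r).succ) ∨
        (∃ r : Fin m, r.val = m - 1 ∧ a = (u r).succ ∧ b = 0) ∨
        (∃ q q' : Fin m, q'.val = q.val + 1 ∧ a = (u q).succ ∧ b = (u q').succ)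
    then 1 else 0

/-- "The TSP polytope" `𝒫ₙ` (with `m = n - 1`): the convex hull of the tour
incidence vectors. -/
def tspPolytope (m : ℕ) : Set (Fin (m + 1) → Fin (m + 1) → ℝ) :=
  convexHull ℝ {y | ∃ u : Equiv.Perm (Fin m), y = tourVec m u}

/-- The cost `d(0,u(1)) + Σ_{q=1}^{m−1} d(u(q),u(q+1)) + d(u(m),0)` of the TSP
tour `0 → u(1) → … → u(m) → 0` associated with a permutation `u` of `{1,…,m}`. -/
def tourCost (m : ℕ) (d : Fin (m + 1) → Fin (m + 1) → ℝ) (u : Equiv.Perm (Fin m)) : ℝ :=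
  (∑ r : Fin m, if r.val = 0 then d 0 ((u r).succ) else 0) +
  (∑ q : Fin m, ∑ q' : Fin m, if q'.val = q.val + 1 then d ((u q).succ) ((u q').succ) else 0) +
  (∑ r : Fin m, if r.val = m - 1 then d ((u r).succ) 0 else 0)


lemma tourVec_nonneg (m : ℕ) (u : Equiv.Perm (Fin m)) (a b : Fin (m+1)) :
    0 ≤ tourVec m u a b := by
  unfold tourVec; split <;> norm_num

lemma tourVec_succ_succ (m : ℕ) (u : Equiv.Perm (Fin m)) (i j : Fin m) :
    tourVec m u i.succ j.succ =
      if ∃ q q' : Fin m, q'.val = q.val + 1 ∧ i = u q ∧ j = u q' then 1 else 0 := by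
  unfold tourVec
  refine if_congr ?_ rfl rfl
  constructor
  · rintro (⟨r, _, ha, _⟩ | ⟨r, _, _, hb⟩ | ⟨q, q', h, ha, hb⟩)
    · exact absurd ha (Fin.succ_ne_zero i)
    · exact absurd hb (Fin.succ_ne_zero j)
    · exact ⟨q, q', h, Fin.succ_injective _ ha, Fin.succ_injective _ hb⟩
  · rintro ⟨q, q', h, ha, hb⟩
    exact Or.inr (Or.inr ⟨q, q', h, by rw [ha], by rw [hb]⟩)

lemma qbar1_mem (m : ℕ) (hm : 1 ≤ m) (u : Equiv.Perm (Fin m)) :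
    (permMatrix m u, tourVec m u) ∈ Qbar1 m := by
  obtain ⟨k, rfl⟩ : ∃ k, m = k + 1 := ⟨m - 1, by omega⟩
  refine ⟨⟨?_, ?_, ?_⟩, ?_, ?_, ?_, ?_, ?_, ?_⟩
  · intro i
    simp only [permMatrix]
    rw [Finset.sum_congr rfl (fun r _ => if_congr
      (show (i = u r) ↔ (r = u.symm i) by rw [Equiv.eq_symm_apply, eq_comm]) rfl rfl)]
    simp
  · intro r
    dsimp only
    simp [permMatrix]
  · intro i r; dsimp only [permMatrix]; split <;> norm_num
  · intro a
    dsimp only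
    unfold tourVec
    rw [if_neg]
    rintro (⟨r, _, rfl, hb⟩ | ⟨r, _, rfl, hb⟩ | ⟨q, q', h, rfl, hb⟩)
    · exact Fin.succ_ne_zero _ hb.symm
    · exact Fin.succ_ne_zero _ hb
    · have hq := u.injective (Fin.succ_injective _ hb)
      rw [hq] at h; omega
  · intro i r hr
    dsimp only
    unfold permMatrix tourVec
    by_cases h : i = u r
    · rw [if_pos (Or.inl ⟨r, hr, rfl, by rw [h]⟩), if_pos h]
    · rw [if_neg, if_neg h]
      rintro (⟨r0, hr0, _, hb⟩ | ⟨r0, _, ha, _⟩ | ⟨q, q', _, ha, _⟩)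
      · have : r0 = r := Fin.ext (by omega)
        exact h (this ▸ Fin.succ_injective _ hb)
      · exact Fin.succ_ne_zero _ ha.symm
      · exact Fin.succ_ne_zero _ ha.symm
  · intro i r hr
    dsimp only
    unfold permMatrix tourVec
    by_cases h : i = u r
    · rw [if_pos (Or.inr (Or.inl ⟨r, hr, by rw [h], rfl⟩)), if_pos h]
    · rw [if_neg, if_neg h]
      rintro (⟨r0, _, ha, _⟩ | ⟨r0, hr0, ha, _⟩ | ⟨q, q', _, _, hb⟩)
      · exact Fin.succ_ne_zero _ ha
      · have : r0 = r := Fin.ext (by omega)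
        exact h (this ▸ Fin.succ_injective _ ha)
      · exact Fin.succ_ne_zero _ hb.symm
  · intro i j r r' hij hr'
    dsimp only
    by_cases h1 : i = u r
    · by_cases h2 : j = u r'
      · have hy : tourVec (k+1) u i.succ j.succ = 1 := by
          rw [tourVec_succ_succ, if_pos ⟨r, r', hr', h1, h2⟩]
        simp only [permMatrix, if_pos h1, if_pos h2, hy]
        norm_num
    
      · have := tourVec_nonneg (k+1) u i.succ j.succ
        simp only [permMatrix, if_pos h1, if_neg h2]
        linarith
    · have := tourVec_nonneg (k+1) u i.succ j.succ
      have h2 : permMatrix (k+1) u j r' ≤ 1 := by unfold permMatrix; split <;> norm_num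
      simp only [permMatrix, if_neg h1] at *
      linarith [h2]
  · dsimp only
    have step1 : ∀ i j : Fin (k+1),
        (if i = j then (0:ℝ) else tourVec (k+1) u i.succ j.succ) =
          if ∃ q q' : Fin (k+1), q'.val = q.val + 1 ∧ i = u q ∧ j = u q' then 1 else 0 := by
      intro i j
      rw [tourVec_succ_succ]
      by_cases hij : i = j
      · rw [if_pos hij, eq_comm, if_neg]
        rintro ⟨q, q', h, ha, hb⟩
        have : q = q' := u.injective (ha ▸ hb ▸ hij)
        omega
      · rw [if_neg hij]
    calc (∑ i : Fin (k+1), ∑ j : Fin (k+1),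
            if i = j then (0:ℝ) else tourVec (k+1) u i.succ j.succ)
        = ∑ i : Fin (k+1), ∑ j : Fin (k+1),
            if ∃ q q' : Fin (k+1), q'.val = q.val + 1 ∧ i = u q ∧ j = u q' then (1:ℝ) else 0 := by
          exact Finset.sum_congr rfl fun i _ => Finset.sum_congr rfl fun j _ => step1 i j
      _ = ∑ q : Fin (k+1), ∑ q1 : Fin (k+1),
            if ∃ q0 q' : Fin (k+1), q'.val = q0.val + 1 ∧ u q = u q0 ∧ u q1 = u q' then (1:ℝ) else 0 := by
          rw [← Equiv.sum_comp u (fun i => ∑ j : Fin (k+1),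
            if ∃ q0 q' : Fin (k+1), q'.val = q0.val + 1 ∧ i = u q0 ∧ j = u q' then (1:ℝ) else 0)]
          exact Finset.sum_congr rfl fun q _ => (Equiv.sum_comp u _).symm
      _ = ∑ q : Fin (k+1), ∑ q1 : Fin (k+1),
            if q1.val = q.val + 1 then (1:ℝ) else 0 := by
          refine Finset.sum_congr rfl fun q _ => Finset.sum_congr rfl fun q1 _ => ?_
          refine if_congr ?_ rfl rfl
          constructor
          · rintro ⟨q0, q', h, ha, hb⟩
            rw [u.injective ha, u.injective hb]; exact h
          · intro h; exact ⟨q, q1, h, rfl, rfl⟩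
      _ = ∑ q : Fin (k+1), if q ≠ Fin.last k then (1:ℝ) else 0 := by
          refine Finset.sum_congr rfl fun q _ => ?_
          by_cases h : q = Fin.last k
          · rw [if_neg (by simp [h]), Finset.sum_eq_zero]
            intro q1 _
            rw [if_neg]
            intro hc
            rw [h, Fin.val_last] at hc
            omega
          · rw [if_pos h]
            have hlt : q.val + 1 < k + 1 := by
              have := q.isLt
              have : q.val ≠ k := fun hc => h (Fin.ext hc)
              omega
            rw [Finset.sum_eq_single (⟨q.val + 1, hlt⟩ : Fin (k+1))]
            · simp
            · intro q1 _ hq1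
              rw [if_neg]
              intro hc
              exact hq1 (Fin.ext hc)
            · simp
      _ = ((k+1 : ℕ) : ℝ) - 1 := by
          have h1 : ∀ q : Fin (k+1), (if q ≠ Fin.last k then (1:ℝ) else 0) =
              1 - (if q = Fin.last k then 1 else 0) := by
            intro q; by_cases h : q = Fin.last k <;> simp [h]
          rw [Finset.sum_congr rfl fun q _ => h1 q, Finset.sum_sub_distrib,
            Finset.sum_const, Finset.sum_ite_eq' Finset.univ (Fin.last k) (fun _ => (1:ℝ))]
          simp
  · intro a b; exact tourVec_nonneg _ _ _ _


lemma qbar1_convex (m : ℕ) : Convex ℝ (Qbar1 m) := by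
  rintro ⟨w1, y1⟩ ⟨⟨hr1, hc1, hn1⟩, hd1, h01, hi01, hq1, hs1, hy1⟩
         ⟨w2, y2⟩ ⟨⟨hr2, hc2, hn2⟩, hd2, h02, hi02, hq2, hs2, hy2⟩
         a b ha hb hab
  dsimp only at *
  show (a • w1 + b • w2, a • y1 + b • y2) ∈ Qbar1 m
  refine ⟨⟨?_, ?_, ?_⟩, ?_, ?_, ?_, ?_, ?_, ?_⟩ <;>
    dsimp only <;>
    simp only [Pi.add_apply, Pi.smul_apply, smul_eq_mul]
  · intro i
    rw [Finset.sum_add_distrib, ← Finset.mul_sum, ← Finset.mul_sum, hr1 i, hr2 i]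
    linarith
  · intro r
    rw [Finset.sum_add_distrib, ← Finset.mul_sum, ← Finset.mul_sum, hc1 r, hc2 r]
    linarith
  · intro i r
    exact add_nonneg (mul_nonneg ha (hn1 i r)) (mul_nonneg hb (hn2 i r))
  · intro i
    rw [hd1 i, hd2 i]; ring
  · intro i r hr
    rw [h01 i r hr, h02 i r hr]
  · intro i r hr
    rw [hi01 i r hr, hi02 i r hr]
  · intro i j r r' hij hr'
    have A := hq1 i j r r' hij hr'
    have B := hq2 i j r r' hij hr'
    nlinarith [mul_le_mul_of_nonneg_left A ha, mul_le_mul_of_nonneg_left B hb]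
  · rw [show (∑ i : Fin m, ∑ j : Fin m,
        if i = j then (0:ℝ) else a * y1 i.succ j.succ + b * y2 i.succ j.succ)
        = a * (∑ i : Fin m, ∑ j : Fin m, if i = j then (0:ℝ) else y1 i.succ j.succ)
          + b * (∑ i : Fin m, ∑ j : Fin m, if i = j then (0:ℝ) else y2 i.succ j.succ) from by
      rw [Finset.mul_sum, Finset.mul_sum, ← Finset.sum_add_distrib]
      refine Finset.sum_congr rfl fun i _ => ?_
      rw [Finset.mul_sum, Finset.mul_sum, ← Finset.sum_add_distrib]
      refine Finset.sum_congr rfl fun j _ => ?_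
      split <;> ring]
    rw [hs1, hs2]
    linear_combination ((m : ℝ) - 1) * hab
  · intro i j
    exact add_nonneg (mul_nonneg ha (hy1 i j)) (mul_nonneg hb (hy2 i j))

/-- The TSP polytope `𝒫ₙ` is contained in the projection of
`Q̄₁` onto the `y`-variables. -/
theorem tspPolytope_subset_proj_Qbar1 (n : ℕ) (hn : 3 ≤ n) :
    tspPolytope (n - 1) ⊆
      {y : Fin (n - 1 + 1) → Fin (n - 1 + 1) → ℝ |
        ∃ w : Fin (n - 1) → Fin (n - 1) → ℝ, (w, y) ∈ Qbar1 (n - 1)} := by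
  have hm : 1 ≤ n - 1 := by omega
  unfold tspPolytope
  apply convexHull_min
  · rintro y ⟨u, rfl⟩
    exact ⟨permMatrix (n - 1) u, qbar1_mem (n - 1) hm u⟩
  · rintro y1 ⟨w1, hw1⟩ y2 ⟨w2, hw2⟩ a b ha hb hab
    exact ⟨a • w1 + b • w2, qbar1_convex (n - 1) hw1 hw2 ha hb hab⟩
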